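/- arXiv:0708.3449 — 2 statements merged into one kernel-verified Lean document; each statement's English description precedes it below -/
import Mathlib

section
/- Let n ≥ 1, let v* ∈ ℂⁿ with ‖v*‖ = 1, let 0 < γ ≤ 2·ln 3/(9e), and set K := { zv ∈ Bⁿ : z ∈ ℂ, |z| < 1, v ∈ ℂⁿ, ‖v‖ = 1, ‖v − v*‖ ≤ γ }. Then for every boundary point z of the unit ball Bⁿ ⊂ ℂⁿ there is a real straight line l_z ⊂ ℂⁿ passing through z such that l_z intersects K in an interval I_z of length |I_z| > (9/10)·γ. -/
open Metric Set Filter MeasureTheory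
open scoped Real ENNReal Topology

noncomputable section

abbrev En (n : ℕ) := EuclideanSpace ℂ (Fin n)

/-- `M_f(r, z₀)`: the supremum of `|f|` over the open ball of radius `r` about `z₀`. -/
def supMod {E : Type*} [NormedAddCommGroup E] (f : E → ℂ) (r : ℝ) (z₀ : E) : ℝ :=
  sSup ((fun z => ‖f z‖) '' Metric.ball z₀ r)

/-- `M_f(r) = M_f(r, 0)`. -/
def supMod0 {E : Type*} [NormedAddCommGroup E] (f : E → ℂ) (r : ℝ) : ℝ :=
  supMod f r 0

open Classical in
/-- order of vanishing of `f` at `z` (junk value `0` if `f` is not analytic at `z` or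
vanishes identically near `z`). -/
def ordAt (f : ℂ → ℂ) (z : ℂ) : ℕ :=
  if h : AnalyticAt ℂ f z then (analyticOrderAt f z).toNat else 0

/-- `n_f(r)`: the number of zeros of `f` in the open disc of radius `r` about `0`,
counted with multiplicities. -/
def zeroCountE (f : ℂ → ℂ) (r : ℝ) : ℝ≥0∞ :=
  ∑' z : Metric.ball (0 : ℂ) r, (ordAt f z : ℝ≥0∞)

/-- `v_f(r)`: the valency of `f` in the disc of radius `r` about `0`. -/
def valencyE (f : ℂ → ℂ) (r : ℝ) : ℝ≥0∞ :=
  ⨆ c : ℂ, zeroCountE (fun z => f z + c) r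

/-- The Bernstein index `b_f(r)` of `f` on the disc of radius `r` about `0`. -/
def bern (f : ℂ → ℂ) (r : ℝ) : ℝ :=
  sSup {x | ∃ (z : ℂ) (s : ℝ), 0 < s ∧
    Metric.closedBall z (Real.exp 1 * s) ⊆ Metric.ball (0 : ℂ) r ∧
    x = Real.log (supMod f (Real.exp 1 * s) z) - Real.log (supMod f s z)}

/-- `R_f(r,t,s) = M_f(r/t)/M_f(r/s)`. -/
def Rquot {E : Type*} [NormedAddCommGroup E] (f : E → ℂ) (r t s : ℝ) : ℝ :=
  supMod0 f (r / t) / supMod0 f (r / s)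

/-- `k(t,s)`. -/
def kts (t s : ℝ) : ℝ :=
  Real.log (8 * Real.exp (Real.pi ^ 2) * s * Real.sqrt t / (Real.sqrt t - 1) ^ 2)

/-- The identification of `ℂ` with the diagonal line; for `n = 1` this is the natural
identification `ℂ ≃ ℂ¹`. -/
def diagC (n : ℕ) (z : ℂ) : En n := (WithLp.equiv 2 (∀ _ : Fin n, ℂ)).symm fun _ => z

/-- `V_f(r,t)`: infimum of valencies of restrictions of `f` to complex lines through `0`
(on which `f` is nonconstant). -/
def VfE (n : ℕ) (f : En n → ℂ) (r t : ℝ) : ℝ≥0∞ :=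
  ⨅ v : {v : En n // ‖v‖ = 1 ∧
      ¬∃ c : ℂ, Set.EqOn (fun z : ℂ => f (z • v)) (fun _ => c) (Metric.ball (0 : ℂ) (t * r))},
    valencyE (fun z : ℂ => f (z • (v : En n))) (r / Real.sqrt t)

/-- `N_f(r,t)`. -/
def NfE (n : ℕ) (f : En n → ℂ) (r t : ℝ) : ℝ≥0∞ :=
  if n = 1 then valencyE (fun z : ℂ => f (diagC n z)) (r / Real.sqrt t)
  else
    max (ENNReal.ofReal (sSup {x | ∃ s : ℝ, t ≤ s ∧
        x = Real.log (Rquot f r t s / Real.sqrt t) / kts t s}))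
      (VfE n f r t)

/-- The class `F_{p,q}(r;t;M₂)`. -/
def MemF (n : ℕ) (g : En n × ℂ → ℂ) (p q r t M₂ : ℝ) : Prop :=
  DifferentiableOn ℂ g (Metric.ball (0 : En n) (t * r) ×ˢ Metric.ball (0 : ℂ) (3 * M₂)) ∧
  (∀ v : En n, ‖v‖ = 1 → ∀ w ∈ Metric.ball (0 : ℂ) (3 * M₂),
    supMod0 (fun z : ℂ => g (z • v, w)) (t * r) ≤
      Real.exp p * supMod0 (fun z : ℂ => g (z • v, w)) r) ∧
  (∀ z ∈ Metric.ball (0 : En n) (t * r), bern (fun w => g (z, w)) (3 * M₂) ≤ q)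

/-- The class `F_{p,q}(r;t;M₂)` in the one-dimensional case `n = 1`. -/
def MemF1 (g : ℂ × ℂ → ℂ) (p q r t M₂ : ℝ) : Prop :=
  DifferentiableOn ℂ g (Metric.ball (0 : ℂ) (t * r) ×ˢ Metric.ball (0 : ℂ) (3 * M₂)) ∧
  (∀ w ∈ Metric.ball (0 : ℂ) (3 * M₂),
    supMod0 (fun z : ℂ => g (z, w)) (t * r) ≤ Real.exp p * supMod0 (fun z : ℂ => g (z, w)) r) ∧
  (∀ z ∈ Metric.ball (0 : ℂ) (t * r), bern (fun w => g (z, w)) (3 * M₂) ≤ q)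

end

/-- The convex body `K` of Lemma 6.3. -/
def Kset (n : ℕ) (vstar : En n) (γ : ℝ) : Set (En n) :=
  {x | ∃ (w : ℂ) (v : En n), ‖w‖ < 1 ∧ ‖v‖ = 1 ∧ ‖v - vstar‖ ≤ γ ∧ x = w • v}

open scoped InnerProductSpace

lemma mem_Kset_iff {n : ℕ} {vstar : En n} (hvstar : ‖vstar‖ = 1) {γ : ℝ} (hγ0 : 0 ≤ γ)
    (hc : 0 < 1 - γ^2/2) (x : En n) :
    x ∈ Kset n vstar γ ↔ ‖x‖ < 1 ∧ (1 - γ^2/2) * ‖x‖ ≤ ‖(⟪vstar, x⟫_ℂ)‖ := by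
  constructor
  · rintro ⟨w, v, hw, hv, hvv, rfl⟩
    have hwn : ‖w • v‖ = ‖w‖ := by rw [norm_smul, hv, mul_one]
    have hsub : ‖v - vstar‖^2 = 2 - 2 * RCLike.re (⟪vstar, v⟫_ℂ) := by
      rw [norm_sub_sq (𝕜 := ℂ), hv, hvstar, inner_re_symm]; ring
    have hγsq : ‖v - vstar‖^2 ≤ γ^2 := pow_le_pow_left₀ (norm_nonneg _) hvv 2
    have hre : 1 - γ^2/2 ≤ RCLike.re (⟪vstar, v⟫_ℂ) := by nlinarith
    have habs : 1 - γ^2/2 ≤ ‖(⟪vstar, v⟫_ℂ)‖ := hre.trans (RCLike.re_le_norm _)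
    refine ⟨by rwa [hwn], ?_⟩
    rw [inner_smul_right, norm_mul, hwn, mul_comm ‖w‖ _]
    exact mul_le_mul_of_nonneg_right habs (norm_nonneg w)
  · rintro ⟨hx1, hx2⟩
    by_cases hx0 : x = 0
    · subst hx0; exact ⟨0, vstar, by simp, hvstar, by simpa using hγ0, by simp⟩
    · have hxn : 0 < ‖x‖ := norm_pos_iff.mpr hx0
      set p : ℂ := ⟪vstar, x⟫_ℂ with hp
      have hpn : 0 < ‖p‖ := lt_of_lt_of_le (mul_pos hc hxn) hx2
      have hp0 : p ≠ 0 := norm_pos_iff.mp hpn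
      set w : ℂ := (‖x‖ : ℂ) * p / (‖p‖ : ℂ) with hwdef
      have hw0 : w ≠ 0 := by
        apply div_ne_zero
        · exact mul_ne_zero (by exact_mod_cast hxn.ne') hp0
        · exact_mod_cast hpn.ne'
      have hwn : ‖w‖ = ‖x‖ := by
        rw [hwdef, norm_div, norm_mul, Complex.norm_real, Complex.norm_real,
          Real.norm_eq_abs, Real.norm_eq_abs, abs_of_pos hxn, abs_of_pos hpn]
        have habs0 : ‖p‖ ≠ 0 := hpn.ne'
        field_simp
      have hnv : ‖w⁻¹ • x‖ = 1 := by
        rw [norm_smul, norm_inv, hwn, inv_mul_cancel₀ hxn.ne']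
      have hip : ⟪vstar, w⁻¹ • x⟫_ℂ = ((‖p‖ / ‖x‖ : ℝ) : ℂ) := by
        rw [inner_smul_right, ← hp, hwdef]
        push_cast
        field_simp
      have hre : RCLike.re (⟪vstar, w⁻¹ • x⟫_ℂ) = ‖p‖ / ‖x‖ := by
        rw [hip]; simp
      have hcle : (1 - γ^2/2) ≤ ‖p‖ / ‖x‖ := (le_div_iff₀ hxn).mpr hx2
      have h2 : ‖w⁻¹ • x - vstar‖^2 ≤ γ^2 := by
        rw [norm_sub_sq (𝕜 := ℂ), hnv, hvstar, inner_re_symm, hre]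
        nlinarith
      exact ⟨w, w⁻¹ • x, by rw [hwn]; exact hx1, hnv,
        le_of_pow_le_pow_left₀ two_ne_zero hγ0 h2, (smul_inv_smul₀ hw0 x).symm⟩

set_option maxHeartbeats 1000000 in
private lemma auxSigma (γ σ : ℝ) (hγ0 : 0 < γ) (hγ9 : γ ≤ 2/9)
    (hσ2 : σ^2 = 1 - (1 - γ^2/2)^2) : σ ≤ 1/4 := by
  have hγ2 : γ^2 ≤ 4/81 := by nlinarith
  have h : σ^2 ≤ (1/4)^2 := by
    rw [hσ2]; nlinarith [sq_nonneg (γ^2), sq_nonneg γ]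
  calc σ ≤ |σ| := le_abs_self σ
    _ ≤ 1/4 := by
        rw [← sq_abs] at h
        exact le_of_pow_le_pow_left₀ two_ne_zero (by norm_num) h

set_option maxHeartbeats 1000000 in
private lemma auxGam (γ : ℝ) (hγ0 : 0 < γ) (hγ9 : γ ≤ 2/9) :
    (9/10*γ*(1 - γ^2/2))^2 < 1 - (1 - γ^2/2)^2 := by
  have hγ2 : γ^2 ≤ 4/81 := by nlinarith
  nlinarith [mul_pos hγ0 hγ0, sq_nonneg γ,
    mul_le_mul_of_nonneg_left hγ2 (sq_nonneg γ)]

set_option maxHeartbeats 1000000 in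
private lemma auxNums (γ r σ m : ℝ) (hγ0 : 0 < γ) (hγ9 : γ ≤ 2/9)
    (hr0 : 0 ≤ r) (hr1 : r ≤ 1) (hrc : r < 1 - γ^2/2)
    (hσ2 : σ^2 = 1 - (1 - γ^2/2)^2) (hσpos : 0 < σ)
    (hm2 : m^2 = 1 - r^2) (hmpos : 0 < m) :
    σ * r < (1 - γ^2/2) * m ∧ |σ * (1/2 - r)| < (1 - γ^2/2) * m ∧
      σ * (1 - 5*r/4) < 3/4 * ((1 - γ^2/2) * m) := by
  have hc1 : (79:ℝ)/81 ≤ 1 - γ^2/2 := by nlinarith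
  have hcpos : (0:ℝ) < 1 - γ^2/2 := by nlinarith
  have hclt : 1 - γ^2/2 < 1 := by nlinarith
  have hMpos : 0 < (1 - γ^2/2) * m := mul_pos hcpos hmpos
  have hcr2 : r^2 < (1 - γ^2/2)^2 := by nlinarith
  have hσnn : (0:ℝ) ≤ 1 - (1 - γ^2/2)^2 := by nlinarith [sq_nonneg σ, hσ2]
  have hd2 : (1/2 - r)^2 ≤ 1/4 := by nlinarith [mul_nonneg hr0 (sub_nonneg.mpr hr1)]
  have hc14 : (1:ℝ)/4 ≤ (1 - γ^2/2)^2 := by nlinarith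
  refine ⟨?_, ?_, ?_⟩
  · have hsq : (σ*r)^2 < ((1 - γ^2/2)*m)^2 := by
      rw [mul_pow, mul_pow, hσ2, hm2]; linarith [hcr2]
    exact lt_of_pow_lt_pow_left₀ 2 hMpos.le hsq
  · have s1 : (1-(1-γ^2/2)^2)*((1/2-r)^2) ≤ (1-(1-γ^2/2)^2)*(1/4) :=
      mul_le_mul_of_nonneg_left hd2 hσnn
    have s2 : (1-(1-γ^2/2)^2)*(1/4) ≤ (1-(1-γ^2/2)^2)*((1-γ^2/2)^2) :=
      mul_le_mul_of_nonneg_left hc14 hσnn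
    have s3 : (1-γ^2/2)^2*(1-(1-γ^2/2)^2) < (1-γ^2/2)^2*(1-r^2) := by
      have : 1-(1-γ^2/2)^2 < 1-r^2 := by linarith
      exact mul_lt_mul_of_pos_left this (by positivity)
    have hsq : (σ*(1/2-r))^2 < ((1 - γ^2/2)*m)^2 := by
      rw [mul_pow, mul_pow, hσ2, hm2]; linarith [s1, s2, s3]
    rw [← sq_abs (σ*(1/2-r))] at hsq
    exact lt_of_pow_lt_pow_left₀ 2 hMpos.le hsq
  · have hσ14 : σ ≤ 1/4 := auxSigma γ σ hγ0 hγ9 hσ2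
    by_cases hr45 : 4/5 ≤ r
    · have h1 : 1 - 5*r/4 ≤ 0 := by linarith
      have h2 : σ*(1 - 5*r/4) ≤ 0 := mul_nonpos_of_nonneg_of_nonpos hσpos.le h1
      linarith [h2, hMpos]
    · push_neg at hr45
      have hrr : r^2 < 16/25 := by nlinarith [mul_nonneg hr0 hr0]
      have hm35 : 3/5 ≤ m := by
        have h : (3/5:ℝ)^2 ≤ m^2 := by rw [hm2]; linarith [hrr]
        exact le_of_pow_le_pow_left₀ two_ne_zero hmpos.le h
      have hcm : (79:ℝ)/81 * (3/5) ≤ (1 - γ^2/2) * m :=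
        mul_le_mul hc1 hm35 (by norm_num) (by linarith)
      have h3 : σ*(1 - 5*r/4) ≤ σ := by nlinarith [mul_nonneg hσpos.le hr0]
      linarith

set_option maxHeartbeats 1600000 in
/-- **Lemma 6.3** (a geometric lemma: long chords of `K` through boundary points). -/
theorem long_chord (n : ℕ) (hn : 1 ≤ n) (vstar : En n) (hvstar : ‖vstar‖ = 1)
    (γ : ℝ) (hγ0 : 0 < γ) (hγ : γ ≤ 2 * Real.log 3 / (9 * Real.exp 1))
    (z : En n) (hz : ‖z‖ = 1) :
    ∃ u : En n, ‖u‖ = 1 ∧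
      ∃ a b : ℝ, 9 / 10 * γ < b - a ∧
        Set.Ioo a b ⊆ {τ : ℝ | z + τ • u ∈ Kset n vstar γ} ∧
        {τ : ℝ | z + τ • u ∈ Kset n vstar γ} ⊆ Set.Icc a b := by
  have hepos := Real.exp_pos 1
  have he : (2:ℝ) ≤ Real.exp 1 := by nlinarith [Real.add_one_le_exp (1:ℝ)]
  have hlog : Real.log 3 ≤ 2 := by
    nlinarith [Real.log_le_sub_one_of_pos (by norm_num : (0:ℝ) < 3)]
  have hγ9 : γ ≤ 2/9 := by
    have h1 : 2 * Real.log 3 / (9 * Real.exp 1) ≤ 4 / 18 :=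
      div_le_div₀ (by norm_num) (by linarith) (by norm_num) (by linarith)
    have : (4:ℝ)/18 = 2/9 := by norm_num
    linarith
  have hc1 : (79:ℝ)/81 ≤ 1 - γ^2/2 := by nlinarith
  have hcpos : (0:ℝ) < 1 - γ^2/2 := by nlinarith
  have hclt : 1 - γ^2/2 < 1 := by nlinarith
  set ζ : ℂ := ⟪vstar, z⟫_ℂ with hζdef
  set r : ℝ := ‖ζ‖ with hrdef
  have hr0 : 0 ≤ r := norm_nonneg _
  have hr1 : r ≤ 1 := by
    have h := norm_inner_le_norm (𝕜 := ℂ) vstar z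
    rw [hvstar, hz] at h; simpa [hrdef, hζdef] using h
  clear_value ζ r
  by_cases hcr : 1 - γ^2/2 ≤ r
  · -- Case A : z is inside the cone; take the radial line
    have hrepr : ∀ τ : ℝ, z + τ • (-z : En n) = (1 - τ) • z := by
      intro τ; rw [smul_neg, sub_smul, one_smul]; abel
    refine ⟨-z, by rw [norm_neg, hz], 0, 2, by linarith, ?_, ?_⟩
    · intro τ hτ
      simp only [Set.mem_setOf_eq]
      rw [hrepr, mem_Kset_iff hvstar hγ0.le hcpos]
      have h1 : ‖(1 - τ) • z‖ = |1 - τ| := by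
        rw [norm_smul, hz, mul_one, Real.norm_eq_abs]
      have h2 : ⟪vstar, (1 - τ) • z⟫_ℂ = ((1 - τ : ℝ) : ℂ) * ζ := by
        rw [RCLike.real_smul_eq_coe_smul (K := ℂ), inner_smul_right, hζdef]
        norm_num
      obtain ⟨h3, h4⟩ := hτ
      constructor
      · rw [h1, abs_lt]; constructor <;> linarith
      · rw [h1, h2, norm_mul, Complex.norm_real, Real.norm_eq_abs, ← hrdef]
        have h5 := mul_le_mul_of_nonneg_left hcr (abs_nonneg (1 - τ))
        linarith
    · intro τ hτ
      simp only [Set.mem_setOf_eq] at hτ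
      rw [hrepr, mem_Kset_iff hvstar hγ0.le hcpos] at hτ
      have h1 : ‖(1 - τ) • z‖ = |1 - τ| := by
        rw [norm_smul, hz, mul_one, Real.norm_eq_abs]
      rw [h1] at hτ
      have h2 := abs_lt.mp hτ.1
      exact ⟨by linarith [h2.2], by linarith [h2.1]⟩
  · -- Case B : z is outside the cone
    push_neg at hcr
    have hrc : r < 1 - γ^2/2 := hcr
    have hσsq : (0:ℝ) < 1 - (1 - γ^2/2)^2 := by nlinarith
    set σ : ℝ := Real.sqrt (1 - (1 - γ^2/2)^2) with hσdef
    have hσ2 : σ^2 = 1 - (1 - γ^2/2)^2 := Real.sq_sqrt hσsq.le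
    have hσpos : 0 < σ := Real.sqrt_pos.mpr hσsq
    clear_value σ
    have hmsq : (0:ℝ) < 1 - r^2 := by nlinarith
    set m : ℝ := Real.sqrt (1 - r^2) with hmdef
    have hm2 : m^2 = 1 - r^2 := Real.sq_sqrt hmsq.le
    have hmpos : 0 < m := Real.sqrt_pos.mpr hmsq
    clear_value m
    have hm1 : m ≤ 1 :=
      le_of_pow_le_pow_left₀ two_ne_zero one_pos.le
        (by rw [hm2, one_pow]; linarith only [sq_nonneg r])
    set d : ℝ := 1/2 - r with hddef
    clear_value d
    set M : ℝ := (1 - γ^2/2) * m with hMdef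
    clear_value M
    have hMpos : 0 < M := by rw [hMdef]; exact mul_pos hcpos hmpos
    have hM2 : M^2 = (1 - γ^2/2)^2*(1-r^2) := by rw [hMdef, mul_pow, hm2]
    obtain ⟨hMσr', hMσd', hkey'⟩ :=
      auxNums γ r σ m hγ0 hγ9 hr0 hr1 hrc hσ2 hσpos hm2 hmpos
    have hMσr : σ * r < M := by rw [hMdef]; exact hMσr'
    have hMσd : |σ * d| < M := by rw [hMdef, hddef]; exact hMσd'
    have hden1 : 0 < M + σ * d := by have h := abs_lt.mp hMσd; linarith [h.1]
    have hden2 : 0 < M - σ * d := by have h := abs_lt.mp hMσd; linarith [h.2]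
    set t₁ : ℝ := (M - σ*r)/(M + σ*d) with ht1def
    set t₂ : ℝ := (M + σ*r)/(M - σ*d) with ht2def
    have ht1pos : 0 < t₁ := div_pos (by linarith only [hMσr]) hden1
    clear_value t₁ t₂
    have hσd2 : σ * d + σ * r = σ/2 := by rw [hddef]; ring
    have ht1lt1 : t₁ < 1 := by
      rw [ht1def, div_lt_one hden1]; linarith only [hσd2, hσpos]
    have ht2gt1 : 1 < t₂ := by
      rw [ht2def, lt_div_iff₀ hden2]; linarith only [hσd2, hσpos]
    have ht12 : t₁ < t₂ := ht1lt1.trans ht2gt1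
    have hkey : σ * (1 - 5*r/4) < 3/4 * M := by rw [hMdef]; exact hkey'
    have h54 : (0:ℝ) < 5/4 - r := by linarith
    have hT : t₂ < (2 - r)/(5/4 - r) := by
      rw [ht2def, div_lt_div_iff₀ hden2 h54]
      have hexp : (2 - r)*(M - σ*d) - (M + σ*r)*(5/4 - r) = 3/4*M - σ*(1 - 5*r/4) := by
        rw [hddef]; ring
      linarith only [hexp, hkey]
    -- the direction vector
    set μ : ℂ := if ζ = 0 then 1 else ζ / (r : ℂ) with hμdef
    clear_value μ
    have hμ1 : ‖μ‖ = 1 := by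
      rw [hμdef]; split_ifs with h0
      · simp
      · have hrne : r ≠ 0 := by rw [hrdef]; exact norm_ne_zero_iff.mpr h0
        rw [norm_div, ← hrdef, Complex.norm_real, Real.norm_eq_abs, abs_of_nonneg hr0,
          div_self hrne]
    have hζμ : ζ = (r:ℂ) * μ := by
      rw [hμdef]; split_ifs with h0
      · have hr00 : r = 0 := by rw [hrdef, h0, norm_zero]
        rw [h0, hr00]; simp
      · have hrne : (r:ℂ) ≠ 0 := by
          exact_mod_cast fun h => h0 (by rwa [hrdef, norm_eq_zero] at h)
        field_simp
    have hμc : μ * (starRingEnd ℂ) μ = 1 := by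
      rw [Complex.mul_conj, Complex.normSq_eq_norm_sq, hμ1]
      norm_num
    set w : En n := ((1/2 : ℂ) * μ) • vstar - z with hwdef
    clear_value w
    have hsmulC : ∀ t : ℝ, (t : ℝ) • w = ((t : ℂ)) • w := fun t =>
      RCLike.real_smul_eq_coe_smul (K := ℂ) t w
    have hvv1 : ⟪vstar, vstar⟫_ℂ = 1 := by
      rw [@inner_self_eq_norm_sq_to_K ℂ, hvstar]; norm_num
    have hzz1 : ⟪z, z⟫_ℂ = 1 := by
      rw [@inner_self_eq_norm_sq_to_K ℂ, hz]; norm_num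
    have hvw : ⟪vstar, w⟫_ℂ = μ * (d:ℂ) := by
      rw [hwdef, inner_sub_right, inner_smul_right, hvv1, ← hζdef, hζμ, hddef]
      push_cast; ring
    have hzv : ⟪z, vstar⟫_ℂ = (starRingEnd ℂ) ζ := by
      rw [hζdef]; exact (inner_conj_symm z vstar).symm
    have hzw : ⟪z, w⟫_ℂ = ((r/2 - 1 : ℝ) : ℂ) := by
      rw [hwdef, inner_sub_right, inner_smul_right, hzv, hzz1, hζμ]
      push_cast [map_mul, Complex.conj_ofReal]
      linear_combination ((r:ℂ)/2) * hμc
    have hw2 : ‖w‖^2 = 5/4 - r := by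
      have hns := norm_sub_sq (𝕜 := ℂ) (((1/2 : ℂ) * μ) • vstar) z
      have ha : ‖((1/2 : ℂ) * μ) • vstar‖ = 1/2 := by
        rw [norm_smul, hvstar, mul_one, norm_mul, hμ1, mul_one]; norm_num
      have hip : ⟪((1/2 : ℂ) * μ) • vstar, z⟫_ℂ = ((r/2 : ℝ):ℂ) := by
        rw [inner_smul_left, ← hζdef, hζμ, map_mul,
          show (starRingEnd ℂ) (1/2 : ℂ) = 1/2 by norm_num [map_inv₀, map_ofNat]]
        push_cast
        linear_combination ((r:ℂ)/2) * hμc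
      rw [hwdef, hns, ha, hip, hz]
      simp [Complex.ofReal_re]
      ring
    set L : ℝ := ‖w‖ with hLdef
    have hL2 : L^2 = 5/4 - r := hw2
    have hL0 : 0 ≤ L := by rw [hLdef]; exact norm_nonneg w
    clear_value L
    have hLpos : 0 < L := by
      rcases hL0.lt_or_eq with h | h
      · exact h
      · exfalso; rw [← h] at hL2; norm_num at hL2; linarith only [hL2, hr1]
    have hLm : m ≤ L := by
      have h1 : m^2 ≤ L^2 := by rw [hm2, hL2]; linarith only [sq_nonneg (r - 1/2)]
      exact le_of_pow_le_pow_left₀ two_ne_zero hL0 h1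
    have hX : ∀ t : ℝ, ‖z + t • w‖^2 = 1 + 2*t*(r/2 - 1) + t^2 * (5/4 - r) := by
      intro t
      have h1 : RCLike.re ⟪z, (t:ℝ) • w⟫_ℂ = t * (r/2 - 1) := by
        rw [hsmulC t, inner_smul_right, hzw, ← Complex.ofReal_mul]
        simp
      have h2 : ‖(t:ℝ) • w‖^2 = t^2 * (5/4 - r) := by
        rw [norm_smul, Real.norm_eq_abs, mul_pow, sq_abs, ← hLdef, hL2]
      rw [norm_add_sq (𝕜 := ℂ), h1, h2, hz]
      ring
    have hXin : ∀ t : ℝ, ‖(⟪vstar, z + t • w⟫_ℂ)‖ = |r + t*d| := by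
      intro t
      rw [inner_add_right, hsmulC t, inner_smul_right, hvw, ← hζdef, hζμ]
      have h3 : (r:ℂ)*μ + (t:ℂ)*(μ*(d:ℂ)) = μ * (((r + t*d : ℝ)):ℂ) := by push_cast; ring
      rw [h3, norm_mul, hμ1, one_mul, Complex.norm_real, Real.norm_eq_abs]
    have hmem : ∀ t : ℝ, (z + t • w ∈ Kset n vstar γ) ↔ (t₁ ≤ t ∧ t ≤ t₂) := by
      intro t
      rw [mem_Kset_iff hvstar hγ0.le hcpos, hXin t]
      have hA : (M + σ*d)*(t - t₁) = σ*(r + t*d) - (1 - t)*M := by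
        rw [ht1def]; field_simp [hden1.ne']; ring
      have hB : (M - σ*d)*(t₂ - t) = σ*(r + t*d) + (1 - t)*M := by
        rw [ht2def]; field_simp [hden2.ne']; ring
      have hquad : (r + t*d)^2 - (1 - γ^2/2)^2 * (1 + 2*t*(r/2 - 1) + t^2 * (5/4 - r))
          = (σ*(r + t*d) - (1 - t)*M) * (σ*(r + t*d) + (1 - t)*M) := by
        rw [hddef, hMdef]
        linear_combination (-(r + t*(1/2 - r))^2) * hσ2 + ((1 - γ^2/2)^2*(1-t)^2) * hm2
      constructor
      · rintro ⟨h1, h2⟩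
        have hn0 : 0 ≤ (1 - γ^2/2) * ‖z + t • w‖ := mul_nonneg hcpos.le (norm_nonneg _)
        have hsq : ((1 - γ^2/2) * ‖z + t • w‖)^2 ≤ |r + t*d|^2 := pow_le_pow_left₀ hn0 h2 2
        rw [sq_abs] at hsq
        have hsq2 : (1 - γ^2/2)^2 * (1 + 2*t*(r/2 - 1) + t^2 * (5/4 - r)) ≤ (r + t*d)^2 := by
          have e : (1 - γ^2/2)^2 * (1 + 2*t*(r/2 - 1) + t^2 * (5/4 - r))
              = ((1 - γ^2/2) * ‖z + t • w‖)^2 := by rw [mul_pow, hX t]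
          linarith only [e, hsq]
        have hprod : 0 ≤ ((M + σ*d)*(t - t₁)) * ((M - σ*d)*(t₂ - t)) := by
          rw [hA, hB, ← hquad]; linarith only [hsq2]
        constructor
        · by_contra hlt; push_neg at hlt
          have hA0 : (M + σ*d)*(t - t₁) < 0 :=
            mul_neg_of_pos_of_neg hden1 (by linarith only [hlt])
          have hB0 : 0 < (M - σ*d)*(t₂ - t) :=
            mul_pos hden2 (by linarith only [hlt, ht12])
          linarith only [hprod, mul_neg_of_neg_of_pos hA0 hB0]
        · by_contra hlt; push_neg at hlt
          have hA0 : 0 < (M + σ*d)*(t - t₁) :=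
            mul_pos hden1 (by linarith only [hlt, ht12])
          have hB0 : (M - σ*d)*(t₂ - t) < 0 :=
            mul_neg_of_pos_of_neg hden2 (by linarith only [hlt])
          linarith only [hprod, mul_neg_of_pos_of_neg hA0 hB0]
      · rintro ⟨h1, h2⟩
        have ht0 : 0 < t := lt_of_lt_of_le ht1pos h1
        have hub : t * (5/4 - r) < 2 - r := by
          have ht' : t < (2 - r)/(5/4 - r) := lt_of_le_of_lt h2 hT
          exact (lt_div_iff₀ h54).mp ht'
        have hnorm2 : ‖z + t • w‖^2 < 1 := by
          rw [hX t]
          have hp := mul_pos ht0 (show 0 < (2 - r) - t*(5/4 - r) by linarith only [hub])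
          linarith only [hp]
        constructor
        · have h3 : ‖z + t • w‖^2 < 1^2 := by simpa using hnorm2
          exact lt_of_pow_lt_pow_left₀ 2 (by norm_num) h3
        · have hprod : 0 ≤ (r + t*d)^2
              - (1 - γ^2/2)^2 * (1 + 2*t*(r/2 - 1) + t^2 * (5/4 - r)) := by
            rw [hquad, ← hA, ← hB]
            exact mul_nonneg (mul_nonneg hden1.le (by linarith only [h1]))
              (mul_nonneg hden2.le (by linarith only [h2]))
          have hsq : ((1 - γ^2/2) * ‖z + t • w‖)^2 ≤ |r + t*d|^2 := by
            rw [sq_abs, mul_pow, hX t]; linarith only [hprod]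
          exact le_of_pow_le_pow_left₀ two_ne_zero (abs_nonneg _) hsq
    refine ⟨L⁻¹ • w, ?_, L*t₁, L*t₂, ?_, ?_, ?_⟩
    · rw [norm_smul, Real.norm_eq_abs, abs_of_pos (inv_pos.mpr hLpos), ← hLdef,
        inv_mul_cancel₀ hLpos.ne']
    · -- length of the chord
      have hts : t₂ - t₁ = σ*M/((M - σ*d)*(M + σ*d)) := by
        have e : (M + σ*r)*(M + σ*d) - (M - σ*d)*(M - σ*r) = σ*M := by
          have hrd : r + d = 1/2 := by rw [hddef]; ring
          linear_combination (2*σ*M) * hrd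
        rw [ht1def, ht2def, div_sub_div _ _ hden2.ne' hden1.ne', e]
      have hden : 0 < (M - σ*d)*(M + σ*d) := mul_pos hden2 hden1
      have hdenle : (M - σ*d)*(M + σ*d) ≤ M^2 := by linarith only [sq_nonneg (σ*d)]
      have h1 : σ*M/M^2 ≤ t₂ - t₁ := by
        rw [hts]
        exact div_le_div_of_nonneg_left (by positivity) hden hdenle
      have h2 : σ*M/M^2 = σ/M := by rw [pow_two]; rw [mul_comm σ M, mul_div_mul_left _ _ hMpos.ne']
      have h3 : σ/M ≤ t₂ - t₁ := h2 ▸ h1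
      have h4 : σ/(1 - γ^2/2) ≤ L * (t₂ - t₁) := by
        have he1 : σ/(1 - γ^2/2) = m * (σ/M) := by
          have h2γ : (0:ℝ) < 2 - γ^2 := by linarith only [hcpos]
          rw [hMdef]; field_simp [hmpos.ne', h2γ.ne']
        rw [he1]
        calc m * (σ/M) ≤ L * (σ/M) :=
              mul_le_mul_of_nonneg_right hLm (by positivity)
          _ ≤ L * (t₂ - t₁) := mul_le_mul_of_nonneg_left h3 hLpos.le
      have h5 : 9/10*γ < σ/(1 - γ^2/2) := by
        rw [lt_div_iff₀ hcpos]
        have hsq : (9/10*γ*(1 - γ^2/2))^2 < σ^2 := by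
          rw [hσ2]; exact auxGam γ hγ0 hγ9
        exact lt_of_pow_lt_pow_left₀ 2 hσpos.le hsq
      have hexp2 : L*t₂ - L*t₁ = L*(t₂ - t₁) := by ring
      linarith only [h4, h5, hexp2]
    · intro τ hτ
      obtain ⟨hτ1, hτ2⟩ := hτ
      simp only [Set.mem_setOf_eq]
      rw [smul_smul, hmem (τ * L⁻¹)]
      constructor
      · rw [← div_eq_mul_inv, le_div_iff₀ hLpos]
        have e1 : t₁ * L = L * t₁ := by ring
        linarith only [e1, hτ1]
      · rw [← div_eq_mul_inv, div_le_iff₀ hLpos]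
        have e2 : t₂ * L = L * t₂ := by ring
        linarith only [e2, hτ2]
    · intro τ hτ
      simp only [Set.mem_setOf_eq] at hτ
      rw [smul_smul, hmem (τ * L⁻¹)] at hτ
      obtain ⟨h1, h2⟩ := hτ
      rw [← div_eq_mul_inv, le_div_iff₀ hLpos] at h1
      rw [← div_eq_mul_inv, div_le_iff₀ hLpos] at h2
      have e1 : t₁ * L = L * t₁ := by ring
      have e2 : t₂ * L = L * t₂ := by ring
      exact ⟨by linarith only [e1, h1], by linarith only [e2, h2]⟩
end

section
/- Let f be a nonconstant entire function on ℂⁿ of infinite order, i.e., limsup_{r→∞} ln m_f(r)/ln r = ∞, and set φ_f(t) := m_f(e^t) for t ∈ ℝ (a convex increasing function). Then liminf_{t→∞} t²·φ_f'₊(t)/(φ_f(t)·(ln φ_f(t))²) = 0, where φ_f'₊ denotes the right derivative of the convex function φ_f. -/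
open Metric Set Filter MeasureTheory
open scoped Real ENNReal Topology

section Aux

open Real

variable {n : ℕ} {f : En n → ℂ}

lemma bddAbove_norm_image (hf : Continuous f) (r : ℝ) :
    BddAbove ((fun z => ‖f z‖) '' Metric.ball (0 : En n) r) := by
  rcases le_or_gt r 0 with h | h
  · simp [Metric.ball_eq_empty.2 h]
  · exact BddAbove.mono (Set.image_mono Metric.ball_subset_closedBall)
      ((isCompact_closedBall (0 : En n) r).bddAbove_image hf.norm.continuousOn)

lemma le_supMod0 (hf : Continuous f) {r : ℝ} {z : En n} (hz : z ∈ Metric.ball (0 : En n) r) :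
    ‖f z‖ ≤ supMod0 f r :=
  le_csSup (bddAbove_norm_image hf r) ⟨z, hz, rfl⟩

lemma supMod0_nonneg (hf : Continuous f) (r : ℝ) : 0 ≤ supMod0 f r := by
  rcases le_or_gt r 0 with h | h
  · simp [supMod0, supMod, Metric.ball_eq_empty.2 h, Real.sSup_empty]
  · exact (norm_nonneg (f 0)).trans (le_supMod0 hf (Metric.mem_ball_self h))

lemma supMod0_mono (hf : Continuous f) : Monotone (supMod0 f) := by
  intro r s hrs
  rcases le_or_gt r 0 with h | h
  · have : supMod0 f r = 0 := by
      simp [supMod0, supMod, Metric.ball_eq_empty.2 h, Real.sSup_empty]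
    rw [this]; exact supMod0_nonneg hf s
  · exact csSup_le_csSup (bddAbove_norm_image hf s)
      ⟨‖f 0‖, ⟨0, Metric.mem_ball_self h, rfl⟩⟩
      (Set.image_mono (Metric.ball_subset_ball hrs))

lemma supMod0_le_add (hf : Continuous f) {R ε : ℝ} (hε : 0 < ε) :
    ∃ δ > 0, ∀ a b : ℝ, 0 < a → a ≤ b → b ≤ R → b - a < δ →
      supMod0 f b ≤ supMod0 f a + ε := by
  have hc : UniformContinuousOn f (Metric.closedBall (0 : En n) R) :=
    (isCompact_closedBall _ _).uniformContinuousOn_of_continuous hf.continuousOn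
  obtain ⟨δ, hδ, hδ'⟩ := Metric.uniformContinuousOn_iff.1 hc ε hε
  refine ⟨δ, hδ, fun a b ha hab hbR hd => ?_⟩
  have hbpos : 0 < b := lt_of_lt_of_le ha hab
  refine Real.sSup_le (fun x hx => ?_) (add_nonneg (supMod0_nonneg hf a) hε.le)
  obtain ⟨z, hz, rfl⟩ := hx
  rw [Metric.mem_ball, dist_zero_right] at hz
  set w : En n := (a / b : ℝ) • z with hw
  have habq : a / b ≤ 1 := div_le_one_of_le₀ hab hbpos.le
  have hwnorm : ‖w‖ = (a / b) * ‖z‖ := by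
    rw [hw, norm_smul, Real.norm_eq_abs, abs_of_pos (by positivity)]
  have hwa : ‖w‖ < a := by
    rw [hwnorm]
    calc (a / b) * ‖z‖ < (a / b) * b := by
          exact mul_lt_mul_of_pos_left hz (by positivity)
      _ = a := by field_simp
  have hzR : z ∈ Metric.closedBall (0 : En n) R := by
    rw [Metric.mem_closedBall, dist_zero_right]; exact hz.le.trans hbR
  have hwR : w ∈ Metric.closedBall (0 : En n) R := by
    rw [Metric.mem_closedBall, dist_zero_right]
    exact hwa.le.trans (hab.trans hbR)
  have hdist : dist z w < δ := by
    have hzw : z - w = ((1 : ℝ) - a / b) • z := by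
      rw [hw, sub_smul, one_smul]
    rw [dist_eq_norm, hzw, norm_smul, Real.norm_eq_abs, abs_of_nonneg (by linarith)]
    calc (1 - a / b) * ‖z‖ ≤ (1 - a / b) * b :=
          mul_le_mul_of_nonneg_left hz.le (by linarith)
      _ = b - a := by field_simp
      _ < δ := hd
  have h1 : ‖f z‖ - ‖f w‖ ≤ dist (f z) (f w) := by
    rw [dist_eq_norm]; exact norm_sub_norm_le _ _
  have h2 : dist (f z) (f w) < ε := hδ' z hzR w hwR hdist
  have h3 : ‖f w‖ ≤ supMod0 f a := by
    refine le_supMod0 hf ?_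
    rw [Metric.mem_ball, dist_zero_right]; exact hwa
  linarith

lemma supMod0_continuousAt (hf : Continuous f) {r : ℝ} (hr : 0 < r) :
    ContinuousAt (supMod0 f) r := by
  rw [Metric.continuousAt_iff]
  intro ε hε
  obtain ⟨δ, hδ, H⟩ := supMod0_le_add (f := f) (R := r + 1) hf (half_pos hε)
  refine ⟨min (min δ 1) (r / 2), by positivity, fun {s} hs => ?_⟩
  rw [Real.dist_eq] at hs ⊢
  have h1 : |s - r| < δ := lt_of_lt_of_le hs (le_trans (min_le_left _ _) (min_le_left _ _))
  have h2 : |s - r| < 1 := lt_of_lt_of_le hs (le_trans (min_le_left _ _) (min_le_right _ _))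
  have h3 : |s - r| < r / 2 := lt_of_lt_of_le hs (min_le_right _ _)
  rw [abs_lt] at h1 h2 h3
  have hspos : 0 < s := by linarith
  rcases le_total s r with h | h
  · have hb := H s r hspos h (by linarith) (by linarith)
    have hm := supMod0_mono hf h
    rw [abs_lt]; constructor <;> linarith
  · have hb := H r s hr h (by linarith) (by linarith)
    have hm := supMod0_mono hf h
    rw [abs_lt]; constructor <;> linarith

lemma supMod0_tendsto_atTop (hf : Differentiable ℂ f) (hnc : ¬∃ c : ℂ, f = fun _ => c) :
    Filter.Tendsto (supMod0 f) Filter.atTop Filter.atTop := by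
  refine Filter.tendsto_atTop_atTop_of_monotone (supMod0_mono hf.continuous) ?_
  by_contra h
  push_neg at h
  obtain ⟨b, hb⟩ := h
  refine hnc ⟨f 0, funext fun z => ?_⟩
  refine hf.apply_eq_apply_of_bounded ?_ z 0
  rw [isBounded_iff_forall_norm_le]
  refine ⟨b, fun x hx => ?_⟩
  obtain ⟨z, rfl⟩ := hx
  refine le_of_lt (lt_of_le_of_lt (le_supMod0 hf.continuous ?_) (hb (‖z‖ + 1)))
  rw [Metric.mem_ball, dist_zero_right]
  linarith [norm_nonneg z]

end Aux


lemma liminf_aux (M : ℝ → ℝ) (φ : ℝ → ℝ) (hφ : ∀ u, φ u = Real.log (M (Real.exp u)))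
    (hmono : Monotone M) (hM0 : ∀ r, 0 ≤ M r)
    (hcont : ∀ r : ℝ, 0 < r → ContinuousAt M r)
    (htend : Filter.Tendsto M Filter.atTop Filter.atTop)
    (hord : Filter.limsup (fun r : ℝ =>
        ENNReal.ofReal (Real.log (Real.log (M r)) / Real.log r)) Filter.atTop = (⊤ : ℝ≥0∞)) :
    Filter.liminf (fun τ : ℝ => τ ^ 2 * derivWithin φ (Set.Ioi τ) τ /
        (φ τ * (Real.log (φ τ)) ^ 2)) Filter.atTop = 0 := by
  set g : ℝ → ℝ := fun τ => τ ^ 2 * derivWithin φ (Set.Ioi τ) τ / (φ τ * (Real.log (φ τ)) ^ 2)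
    with hgdef
  -- basic facts about φ
  have hφtend : Filter.Tendsto φ Filter.atTop Filter.atTop := by
    refine Filter.Tendsto.congr (fun u => (hφ u).symm) ?_
    exact Real.tendsto_log_atTop.comp (htend.comp Real.tendsto_exp_atTop)
  obtain ⟨T₀, hT₀⟩ := Filter.eventually_atTop.1
    ((htend.comp Real.tendsto_exp_atTop).eventually
      (Filter.eventually_ge_atTop (Real.exp (Real.exp 1))))
  set T : ℝ := max T₀ 1 with hTdef
  have hT1 : (1 : ℝ) ≤ T := le_max_right _ _
  have hMe : ∀ t, T ≤ t → Real.exp (Real.exp 1) ≤ M (Real.exp t) := fun t ht =>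
    hT₀ t (le_trans (le_max_left _ _) ht)
  have hMpos : ∀ t, T ≤ t → 0 < M (Real.exp t) := fun t ht =>
    lt_of_lt_of_le (Real.exp_pos _) (hMe t ht)
  have hφe : ∀ t, T ≤ t → Real.exp 1 ≤ φ t := by
    intro t ht
    rw [hφ t, ← Real.log_exp (Real.exp 1)]
    exact Real.log_le_log (Real.exp_pos _) (hMe t ht)
  have hφpos : ∀ t, T ≤ t → 0 < φ t := fun t ht =>
    lt_of_lt_of_le (Real.exp_pos 1) (hφe t ht)
  have hlog1 : ∀ t, T ≤ t → 1 ≤ Real.log (φ t) := by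
    intro t ht
    rw [← Real.log_exp 1]
    exact Real.log_le_log (Real.exp_pos 1) (hφe t ht)
  have hlogpos : ∀ t, T ≤ t → 0 < Real.log (φ t) := fun t ht =>
    lt_of_lt_of_le one_pos (hlog1 t ht)
  have hφmono : ∀ s t, T ≤ s → s ≤ t → φ s ≤ φ t := by
    intro s t hs hst
    rw [hφ s, hφ t]
    exact Real.log_le_log (hMpos s hs) (hmono (Real.exp_le_exp.2 hst))
  have hφcont : ∀ t, T ≤ t → ContinuousAt φ t := by
    intro t ht
    have c1 : ContinuousAt (fun u => M (Real.exp u)) t :=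
      (hcont _ (Real.exp_pos t)).comp Real.continuous_exp.continuousAt
    have c2 : ContinuousAt (fun u => Real.log (M (Real.exp u))) t :=
      Filter.Tendsto.comp (Real.continuousAt_log (ne_of_gt (hMpos t ht))) c1
    exact (funext hφ : φ = _) ▸ c2
  have hD : ∀ τ, T ≤ τ → 0 < φ τ * Real.log (φ τ) ^ 2 := fun τ h =>
    mul_pos (hφpos τ h) (pow_pos (hlogpos τ h) 2)
  -- the key frequent smallness
  have Key : ∀ ε : ℝ, 0 < ε → ∃ᶠ τ in Filter.atTop, g τ < ε := by
    intro ε hε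
    by_contra hcon
    rw [Filter.not_frequently] at hcon
    have hcon' : ∀ᶠ τ : ℝ in Filter.atTop, ε ≤ g τ := hcon.mono fun τ h => not_lt.1 h
    obtain ⟨T₁, hT₁⟩ := Filter.eventually_atTop.1 (hcon'.and (Filter.eventually_ge_atTop T))
    have hder : ∀ τ, max T₁ T ≤ τ →
        HasDerivWithinAt φ (derivWithin φ (Set.Ioi τ) τ) (Set.Ioi τ) τ ∧
        ε * (φ τ * Real.log (φ τ) ^ 2) / τ ^ 2 ≤ derivWithin φ (Set.Ioi τ) τ := by
      intro τ hτ
      have hτT : T ≤ τ := le_trans (le_max_right _ _) hτ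
      have hτ1 : (1 : ℝ) ≤ τ := le_trans hT1 hτT
      have hτ2 : (0 : ℝ) < τ ^ 2 := by positivity
      obtain ⟨hgε, -⟩ := hT₁ τ (le_trans (le_max_left _ _) hτ)
      have hDτ := hD τ hτT
      have hdiff : DifferentiableWithinAt ℝ φ (Set.Ioi τ) τ := by
        by_contra hnd
        rw [hgdef] at hgε
        simp only [derivWithin_zero_of_not_differentiableWithinAt hnd, mul_zero,
          zero_div] at hgε
        exact absurd hgε (not_le.2 hε)
      refine ⟨hdiff.hasDerivWithinAt, ?_⟩
      rw [hgdef] at hgε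
      simp only at hgε
      rw [le_div_iff₀ hDτ] at hgε
      rw [div_le_iff₀ hτ2]
      nlinarith [hgε]
    -- main estimate: log φ t₀ ≤ t₀ / ε for all t₀ ≥ max T₁ T
    have main : ∀ t₀, max T₁ T ≤ t₀ → Real.log (φ t₀) ≤ t₀ / ε := by
      intro t₀ ht₀
      have ht₀T : T ≤ t₀ := le_trans (le_max_right _ _) ht₀
      have ht₀1 : (1 : ℝ) ≤ t₀ := le_trans hT1 ht₀T
      have ht₀pos : (0 : ℝ) < t₀ := lt_of_lt_of_le one_pos ht₀1
      set F : ℝ → ℝ := fun t => (Real.log (φ t))⁻¹ with hFdef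
      have hFX : ∀ X, t₀ ≤ X → F X ≤ F t₀ - ε / t₀ + ε * X⁻¹ := by
        intro X hX
        set B : ℝ → ℝ := fun t => F t₀ - ε / t₀ + ε * t⁻¹ with hBdef
        have key := image_le_of_deriv_right_le_deriv_boundary
          (f := F)
          (f' := fun x => -derivWithin φ (Set.Ioi x) x / (φ x * Real.log (φ x) ^ 2))
          (a := t₀) (b := X) (B := B) (B' := fun x => -ε / x ^ 2)
          ?_ ?_ ?_ ?_ ?_ ?_
        · exact key (Set.right_mem_Icc.2 hX)
        · -- continuity of F
          intro t ht
          have htT : T ≤ t := le_trans ht₀T ht.1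
          exact (((Real.continuousAt_log (ne_of_gt (hφpos t htT))).comp
            (hφcont t htT)).inv₀ (ne_of_gt (hlogpos t htT))).continuousWithinAt
        · -- right derivative of F
          intro x hx
          have hxm : max T₁ T ≤ x := le_trans ht₀ hx.1
          have hxT : T ≤ x := le_trans (le_max_right _ _) hxm
          obtain ⟨hd, -⟩ := hder x hxm
          have h1 : HasDerivWithinAt (fun t => Real.log (φ t))
              (derivWithin φ (Set.Ioi x) x / φ x) (Set.Ioi x) x :=
            hd.log (ne_of_gt (hφpos x hxT))
          have h2 := h1.inv (ne_of_gt (hlogpos x hxT))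
          have heq : -(derivWithin φ (Set.Ioi x) x / φ x) / Real.log (φ x) ^ 2 =
              -derivWithin φ (Set.Ioi x) x / (φ x * Real.log (φ x) ^ 2) := by
            field_simp
          rw [heq] at h2
          exact h2.Ici_of_Ioi
        · -- F t₀ ≤ B t₀
          refine le_of_eq ?_
          simp only [hBdef]
          rw [div_eq_mul_inv]
          ring
        · -- continuity of B
          intro t ht
          have htpos : (0 : ℝ) < t := lt_of_lt_of_le ht₀pos ht.1
          exact (continuousAt_const.add
            (continuousAt_const.mul (continuousAt_inv₀ (ne_of_gt htpos)))).continuousWithinAt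
        · -- right derivative of B
          intro x hx
          have hxpos : (0 : ℝ) < x := lt_of_lt_of_le ht₀pos hx.1
          have hB1 : HasDerivAt B (ε * -(x ^ 2)⁻¹) x :=
            ((hasDerivAt_inv (ne_of_gt hxpos)).const_mul ε).const_add (F t₀ - ε / t₀)
          have heq : ε * -(x ^ 2)⁻¹ = -ε / x ^ 2 := by field_simp
          rw [heq] at hB1
          exact hB1.hasDerivWithinAt
        · -- derivative comparison
          intro x hx
          have hxm : max T₁ T ≤ x := le_trans ht₀ hx.1
          have hxT : T ≤ x := le_trans (le_max_right _ _) hxm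
          have hx1 : (1 : ℝ) ≤ x := le_trans hT1 hxT
          have hx2 : (0 : ℝ) < x ^ 2 := by positivity
          obtain ⟨-, hbound⟩ := hder x hxm
          have hDx := hD x hxT
          rw [div_le_iff₀ hx2] at hbound
          show -derivWithin φ (Set.Ioi x) x / (φ x * Real.log (φ x) ^ 2) ≤ -ε / x ^ 2
          rw [neg_div, neg_div, neg_le_neg_iff, div_le_div_iff₀ hx2 hDx]
          nlinarith [hbound]
      -- take the limit X → ∞
      have l1 : Filter.Tendsto (fun X : ℝ => ε * X⁻¹) Filter.atTop (𝓝 0) := by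
        simpa using tendsto_inv_atTop_zero.const_mul ε
      have l2 : Filter.Tendsto F Filter.atTop (𝓝 0) :=
        tendsto_inv_atTop_zero.comp (Real.tendsto_log_atTop.comp hφtend)
      have hlim : Filter.Tendsto (fun X => F t₀ - ε / t₀ + ε * X⁻¹ - F X) Filter.atTop
          (𝓝 (F t₀ - ε / t₀)) := by
        simpa using (tendsto_const_nhds.add l1).sub l2
      have h0le : 0 ≤ F t₀ - ε / t₀ := by
        refine ge_of_tendsto hlim ?_
        filter_upwards [Filter.eventually_ge_atTop t₀] with X hX
        have := hFX X hX
        linarith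
      have hlp := hlogpos t₀ ht₀T
      have hinv : ε / t₀ ≤ (Real.log (φ t₀))⁻¹ := by
        simp only [hFdef] at h0le
        linarith
      rw [div_le_iff₀ ht₀pos] at hinv
      rw [le_div_iff₀ hε]
      have hmi : Real.log (φ t₀) * (Real.log (φ t₀))⁻¹ = 1 := mul_inv_cancel₀ (ne_of_gt hlp)
      nlinarith [hinv, hlp]
    -- contradiction with infinite order
    have hev : ∀ᶠ r : ℝ in Filter.atTop,
        ENNReal.ofReal (Real.log (Real.log (M r)) / Real.log r) ≤ ENNReal.ofReal (1 / ε) := by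
      filter_upwards [Filter.eventually_ge_atTop (Real.exp (max T₁ T))] with r hr
      have hrpos : (0 : ℝ) < r := lt_of_lt_of_le (Real.exp_pos _) hr
      have hlr : max T₁ T ≤ Real.log r := by
        rw [← Real.log_exp (max T₁ T)]
        exact Real.log_le_log (Real.exp_pos _) hr
      have hlrpos : (0 : ℝ) < Real.log r :=
        lt_of_lt_of_le one_pos (le_trans (le_trans hT1 (le_max_right T₁ T)) hlr)
      have hm := main (Real.log r) hlr
      rw [hφ, Real.exp_log hrpos] at hm
      apply ENNReal.ofReal_le_ofReal
      calc Real.log (Real.log (M r)) / Real.log r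
          ≤ (Real.log r / ε) / Real.log r := by gcongr
        _ = 1 / ε := by field_simp [mul_comm]
    have hle := Filter.limsup_le_of_le (by isBoundedDefault) hev
    rw [hord] at hle
    exact absurd (top_le_iff.1 hle) ENNReal.ofReal_ne_top
  -- eventual nonnegativity
  have h0 : ∀ᶠ τ : ℝ in Filter.atTop, 0 ≤ g τ := by
    filter_upwards [Filter.eventually_ge_atTop T] with τ hτ
    have hd : 0 ≤ derivWithin φ (Set.Ioi τ) τ := by
      by_cases hdiff : DifferentiableWithinAt ℝ φ (Set.Ioi τ) τ
      · have hds := hdiff.hasDerivWithinAt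
        rw [hasDerivWithinAt_iff_tendsto_slope] at hds
        have hset : Set.Ioi τ \ {τ} = Set.Ioi τ := by
          apply Set.diff_singleton_eq_self
          simp
        rw [hset] at hds
        refine ge_of_tendsto hds ?_
        filter_upwards [self_mem_nhdsWithin] with x hx
        rw [Set.mem_Ioi] at hx
        have hmx := hφmono τ x hτ hx.le
        rw [slope_def_field]
        apply div_nonneg <;> linarith
      · rw [derivWithin_zero_of_not_differentiableWithinAt hdiff]
    have hDτ := hD τ hτ
    simp only [hgdef]
    exact div_nonneg (mul_nonneg (sq_nonneg τ) hd) hDτ.le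
  have hbdd : Filter.IsBoundedUnder (· ≥ ·) Filter.atTop g := ⟨0, Filter.eventually_map.2 h0⟩
  have hcob : Filter.IsCoboundedUnder (· ≥ ·) Filter.atTop g :=
    Filter.IsCoboundedUnder.of_frequently_le ((Key 1 one_pos).mono fun x h => h.le)
  refine le_antisymm ?_ (Filter.le_liminf_of_le hcob h0)
  refine le_of_forall_pos_le_add fun ε hε => ?_
  rw [zero_add]
  exact Filter.liminf_le_of_frequently_le ((Key ε hε).mono fun x h => h.le) hbdd

/-- **Lemma 8.3**: for an entire function of infinite order,
`liminf_{t→∞} t²·φ'₊(t)/(φ(t)(ln φ(t))²) = 0`, where `φ(t) = m_f(eᵗ)`. -/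
theorem infinite_order_liminf (n : ℕ) (f : En n → ℂ) (hf : Differentiable ℂ f)
    (hnc : ¬∃ c : ℂ, f = fun _ => c)
    (hord : Filter.limsup
      (fun r : ℝ => ENNReal.ofReal (Real.log (Real.log (supMod0 f r)) / Real.log r))
      Filter.atTop = (⊤ : ℝ≥0∞)) :
    Filter.liminf
      (fun τ : ℝ => τ ^ 2 *
        derivWithin (fun u : ℝ => Real.log (supMod0 f (Real.exp u))) (Set.Ioi τ) τ /
          (Real.log (supMod0 f (Real.exp τ)) *
            (Real.log (Real.log (supMod0 f (Real.exp τ)))) ^ 2))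
      Filter.atTop = 0 := by
  exact liminf_aux (supMod0 f) _ (fun _ => rfl) (supMod0_mono hf.continuous)
    (supMod0_nonneg hf.continuous) (fun r hr => supMod0_continuousAt hf.continuous hr)
    (supMod0_tendsto_atTop hf hnc) hord
end
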